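/- (Coleman, fermionic case) For every Hermitian N_b×N_b matrix γ with 0 ≤ γ ≤ 1 and Tr γ = N (N ≤ N_b), there exists a density matrix ρ on ∧^N ℂ^{N_b} whose 1RDM is γ. Equivalently: any vector of occupation numbers n ∈ [0,1]^{N_b} with ∑nᵢ = N is a convex combination of 0/1 vectors each having exactly N ones (the extreme points of the polytope), so γ arises from a convex combination of Slater-determinant projectors in the natural-orbital basis. -/

import Mathlib

open Matrix BigOperators
open scoped ComplexOrder

/-- Occupation-number basis configurations of the fermionic `N`-particle space `⋀^N ℂ^{N_b}`:
subsets of `N` occupied orbitals out of `N_b`. -/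
abbrev FConfig (Nb N : ℕ) := {s : Finset (Fin Nb) // s.card = N}

/-- Matrix of the operator `aᵢ† aⱼ` (create orbital `i`, annihilate orbital `j`) on the fermionic
`N`-particle space, in the occupation-number basis, with the standard Jordan–Wigner signs. -/
noncomputable def fOp {Nb N : ℕ} (i j : Fin Nb) :
    Matrix (FConfig Nb N) (FConfig Nb N) ℂ := fun s t =>
  if j ∈ t.1 ∧ (i = j ∨ i ∉ t.1) ∧ s.1 = insert i (t.1.erase j) then
    (-1 : ℂ) ^ ((t.1.filter (fun k => k < j)).card + ((t.1.erase j).filter (fun k => k < i)).card)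
  else 0

/-- The 1RDM of a fermionic `N`-particle density matrix: `γᵢⱼ = Tr(ρ aⱼ† aᵢ)`. -/
noncomputable def gammaF {Nb N : ℕ} (ρ : Matrix (FConfig Nb N) (FConfig Nb N) ℂ) :
    Matrix (Fin Nb) (Fin Nb) ℂ := fun i j => (ρ * fOp j i).trace

namespace ColemanAux
variable {Nb : ℕ}

/-- position of `i` relative to `r`: the number of elements of `r` smaller than `i`. -/
def pos (r : Finset (Fin Nb)) (i : Fin Nb) : ℕ := (r.filter (· < i)).card

lemma ordEmb_lt_iff {m : ℕ} {r : Finset (Fin Nb)} (hr : r.card = m) {i : Fin Nb}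
    (hi : i ∉ r) (b : Fin m) :
    r.orderEmbOfFin hr b < i ↔ (b : ℕ) < pos r i := by
  constructor
  · intro h
    have hsub : (Finset.Iic b).image (r.orderEmbOfFin hr) ⊆ r.filter (· < i) := by
      intro x hx
      simp only [Finset.mem_image, Finset.mem_Iic] at hx
      obtain ⟨c, hc, rfl⟩ := hx
      exact Finset.mem_filter.2 ⟨r.orderEmbOfFin_mem hr c,
        lt_of_le_of_lt ((r.orderEmbOfFin hr).monotone hc) h⟩
    have hcard := Finset.card_le_card hsub
    rw [Finset.card_image_of_injective _ (r.orderEmbOfFin hr).injective, Fin.card_Iic] at hcard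
    exact lt_of_lt_of_le (Nat.lt_succ_self _) hcard
  · intro h
    by_contra hlt
    push_neg at hlt
    have hne : r.orderEmbOfFin hr b ≠ i := fun he => hi (he ▸ r.orderEmbOfFin_mem hr b)
    have hgt : i < r.orderEmbOfFin hr b := lt_of_le_of_ne hlt (Ne.symm hne)
    have hsub : r.filter (· < i) ⊆ (Finset.Iio b).image (r.orderEmbOfFin hr) := by
      intro x hx
      obtain ⟨hxr, hxi⟩ := Finset.mem_filter.1 hx
      have : x ∈ Set.range (r.orderEmbOfFin hr) := by
        rw [Finset.range_orderEmbOfFin]; exact hxr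
      obtain ⟨c, rfl⟩ := this
      refine Finset.mem_image.2 ⟨c, Finset.mem_Iio.2 ?_, rfl⟩
      by_contra hcb
      push_neg at hcb
      exact absurd (lt_trans hxi hgt)
        (not_lt.2 ((r.orderEmbOfFin hr).monotone hcb))
    have hcard := Finset.card_le_card hsub
    rw [Finset.card_image_of_injective _ (r.orderEmbOfFin hr).injective, Fin.card_Iio] at hcard
    exact absurd (lt_of_lt_of_le h hcard) (lt_irrefl _)

lemma pos_lt_succ {m : ℕ} {r : Finset (Fin Nb)} (hr : r.card = m) (i : Fin Nb) :
    pos r i < m + 1 :=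
  Nat.lt_succ_of_le (hr ▸ Finset.card_filter_le _ _)

/-- the position of `i` in `insert i r`, as an element of `Fin (m+1)`. -/
def posFin {m : ℕ} (r : Finset (Fin Nb)) (hr : r.card = m) (i : Fin Nb) : Fin (m + 1) :=
  ⟨pos r i, pos_lt_succ hr i⟩

lemma strictMono_insertNth {m : ℕ} {α : Type*} [LinearOrder α] (p : Fin (m + 1)) (x : α)
    (f : Fin m → α) (hf : StrictMono f)
    (hlt : ∀ b : Fin m, f b < x ↔ (b : ℕ) < (p : ℕ))
    (hgt : ∀ b : Fin m, (p : ℕ) ≤ (b : ℕ) → x < f b) :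
    StrictMono (Fin.insertNth (α := fun _ => α) p x f) := by
  intro a a' haa'
  rcases eq_or_ne a p with rfl | ha
  · rcases eq_or_ne a' a with rfl | ha'
    · exact absurd haa' (lt_irrefl _)
    · obtain ⟨b', rfl⟩ := Fin.exists_succAbove_eq ha'
      rw [Fin.insertNth_apply_same, Fin.insertNth_apply_succAbove]
      have hb' : (a : ℕ) ≤ (b' : ℕ) := by
        have := (Fin.lt_succAbove_iff_le_castSucc a b').1 haa'
        exact_mod_cast this
      exact hgt b' hb'
  · obtain ⟨b, rfl⟩ := Fin.exists_succAbove_eq ha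
    rcases eq_or_ne a' p with rfl | ha'
    · rw [Fin.insertNth_apply_same, Fin.insertNth_apply_succAbove]
      refine (hlt b).2 ?_
      have := (Fin.succAbove_lt_iff_castSucc_lt a' b).1 haa'
      exact_mod_cast this
    · obtain ⟨b', rfl⟩ := Fin.exists_succAbove_eq ha'
      rw [Fin.insertNth_apply_succAbove, Fin.insertNth_apply_succAbove]
      exact hf ((Fin.succAbove_lt_succAbove_iff).1 haa')

/-- C1: the ordered enumeration of `insert i r` is `insertNth` at the position of `i`. -/
lemma orderEmb_insert {m : ℕ} {r : Finset (Fin Nb)} (hr : r.card = m) {i : Fin Nb}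
    (hi : i ∉ r) (h' : (insert i r).card = m + 1) :
    ⇑((insert i r).orderEmbOfFin h') =
      Fin.insertNth (α := fun _ => Fin Nb) (posFin r hr i) i (⇑(r.orderEmbOfFin hr)) := by
  have hmono : StrictMono (Fin.insertNth (α := fun _ => Fin Nb) (posFin r hr i) i
      (⇑(r.orderEmbOfFin hr))) := by
    refine strictMono_insertNth _ _ _ (r.orderEmbOfFin hr).strictMono
      (fun b => (ordEmb_lt_iff hr hi b)) (fun b hb => ?_)
    have h1 := (ordEmb_lt_iff hr hi b).not
    push_neg at h1
    have hle : i ≤ r.orderEmbOfFin hr b := h1.2 hb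
    exact lt_of_le_of_ne hle (fun he => hi (he ▸ r.orderEmbOfFin_mem hr b))
  have hmem : ∀ a, Fin.insertNth (α := fun _ => Fin Nb) (posFin r hr i) i
      (⇑(r.orderEmbOfFin hr)) a ∈ insert i r := by
    intro a
    rcases eq_or_ne a (posFin r hr i) with rfl | ha
    · rw [Fin.insertNth_apply_same]; exact Finset.mem_insert_self _ _
    · obtain ⟨b, rfl⟩ := Fin.exists_succAbove_eq ha
      rw [Fin.insertNth_apply_succAbove]
      exact Finset.mem_insert_of_mem (r.orderEmbOfFin_mem hr b)
  exact ((Finset.orderEmbOfFin_unique h' hmem hmono)).symm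

/-- C2: the ordered enumeration of `A.erase k` for `k = A_a`. -/
lemma orderEmb_erase {m : ℕ} {A : Finset (Fin Nb)} (hA : A.card = m + 1) (a : Fin (m + 1))
    (h' : (A.erase (A.orderEmbOfFin hA a)).card = m) :
    ⇑((A.erase (A.orderEmbOfFin hA a)).orderEmbOfFin h') =
      ⇑(A.orderEmbOfFin hA) ∘ a.succAbove := by
  refine ((Finset.orderEmbOfFin_unique h' (fun b => ?_) ?_)).symm
  · refine Finset.mem_erase.2 ⟨?_, A.orderEmbOfFin_mem hA _⟩
    exact fun he => Fin.succAbove_ne a b ((A.orderEmbOfFin hA).injective he)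
  · exact (A.orderEmbOfFin hA).strictMono.comp (Fin.strictMono_succAbove a)

/-- Minor determinant: rows `t`, columns `A` (both of card `m`), entries from `U`. -/
noncomputable def sd (U : Matrix (Fin Nb) (Fin Nb) ℂ) (m : ℕ) (A t : Finset (Fin Nb)) : ℂ :=
  if h : A.card = m ∧ t.card = m then
    Matrix.det (Matrix.of fun a b : Fin m => U (t.orderEmbOfFin h.2 a) (A.orderEmbOfFin h.1 b))
  else 0

lemma sd_eq (U : Matrix (Fin Nb) (Fin Nb) ℂ) {m : ℕ} {A t : Finset (Fin Nb)}
    (hA : A.card = m) (ht : t.card = m) :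
    sd U m A t =
      Matrix.det (Matrix.of fun a b : Fin m =>
        U (t.orderEmbOfFin ht a) (A.orderEmbOfFin hA b)) := by
  rw [sd, dif_pos ⟨hA, ht⟩]

/-- Annihilation-operator matrix element applied to a Slater determinant. -/
noncomputable def ann (U : Matrix (Fin Nb) (Fin Nb) ℂ) (m : ℕ) (A : Finset (Fin Nb))
    (i : Fin Nb) (r : Finset (Fin Nb)) : ℂ :=
  if i ∈ r then 0 else (-1 : ℂ) ^ (pos r i) * sd U (m + 1) A (insert i r)

/-- Laplace expansion: the action of the annihilation operator on a Slater determinant. -/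
lemma ann_eq (U : Matrix (Fin Nb) (Fin Nb) ℂ) {m : ℕ} {A r : Finset (Fin Nb)}
    (hA : A.card = m + 1) (hr : r.card = m) (i : Fin Nb) :
    ann U m A i r = ∑ a : Fin (m + 1),
      (-1 : ℂ) ^ (a : ℕ) * U i (A.orderEmbOfFin hA a) *
        sd U m (A.erase (A.orderEmbOfFin hA a)) r := by
  set p := posFin r hr i with hp
  set M : Matrix (Fin (m + 1)) (Fin (m + 1)) ℂ :=
    Matrix.of fun a b => U (Fin.insertNth (α := fun _ => Fin Nb) p i (⇑(r.orderEmbOfFin hr)) a)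
      (A.orderEmbOfFin hA b) with hM
  have hsub : ∀ b : Fin (m + 1),
      Matrix.det (M.submatrix p.succAbove b.succAbove) =
        sd U m (A.erase (A.orderEmbOfFin hA b)) r := by
    intro b
    have hcard : (A.erase (A.orderEmbOfFin hA b)).card = m := by
      rw [Finset.card_erase_of_mem (A.orderEmbOfFin_mem hA b), hA]
      omega
    rw [sd_eq U hcard hr]
    congr 1
    ext a c
    simp only [Matrix.submatrix_apply, hM, Matrix.of_apply, Fin.insertNth_apply_succAbove]
    rw [orderEmb_erase hA b hcard]
    rfl
  have key : ∑ a : Fin (m + 1), (-1 : ℂ) ^ (a : ℕ) * U i (A.orderEmbOfFin hA a) *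
      sd U m (A.erase (A.orderEmbOfFin hA a)) r = (-1 : ℂ) ^ (pos r i) * M.det := by
    rw [Matrix.det_succ_row M p, Finset.mul_sum]
    refine Finset.sum_congr rfl fun b _ => ?_
    rw [hsub b]
    have hMp : M p b = U i (A.orderEmbOfFin hA b) := by
      simp only [hM, Matrix.of_apply, Fin.insertNth_apply_same]
    rw [hMp]
    symm
    have hsign : (-1 : ℂ) ^ (pos r i) * (-1 : ℂ) ^ ((p : ℕ) + (b : ℕ)) = (-1 : ℂ) ^ (b : ℕ) := by
      have : (p : ℕ) = pos r i := rfl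
      rw [this, pow_add, ← mul_assoc, ← pow_add, ← two_mul, pow_mul, neg_one_sq, one_pow, one_mul]
    calc (-1 : ℂ) ^ (pos r i) * ((-1) ^ ((p : ℕ) + (b : ℕ)) * U i (A.orderEmbOfFin hA b) *
          sd U m (A.erase (A.orderEmbOfFin hA b)) r)
        = ((-1 : ℂ) ^ (pos r i) * (-1 : ℂ) ^ ((p : ℕ) + (b : ℕ))) * U i (A.orderEmbOfFin hA b) *
          sd U m (A.erase (A.orderEmbOfFin hA b)) r := by ring
      _ = _ := by rw [hsign]
  rw [key]
  by_cases hi : i ∈ r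
  · -- duplicate row: determinant vanishes
    have : i ∈ Set.range (r.orderEmbOfFin hr) := by rw [Finset.range_orderEmbOfFin]; exact hi
    obtain ⟨c, hc⟩ := this
    have hdup : M (p.succAbove c) = M p := by
      funext b
      simp only [hM, Matrix.of_apply, Fin.insertNth_apply_succAbove, Fin.insertNth_apply_same, hc]
    have : M.det = 0 := Matrix.det_zero_of_row_eq (Fin.succAbove_ne p c) hdup
    rw [ann, if_pos hi, this, mul_zero]
  · have hins : (insert i r).card = m + 1 := by rw [Finset.card_insert_of_notMem hi, hr]
    have : M.det = sd U (m + 1) A (insert i r) := by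
      rw [sd_eq U hA hins]
      congr 1
      ext a b
      simp only [hM, Matrix.of_apply]
      rw [orderEmb_insert hr hi hins]
    rw [ann, if_neg hi, this]

lemma sum_insert_reparam {m : ℕ} (F : Finset (Fin Nb) → ℂ) :
    (∑ i : Fin Nb, ∑ r ∈ Finset.powersetCard m (Finset.univ : Finset (Fin Nb)),
      (if i ∈ r then 0 else F (insert i r))) =
    (m + 1 : ℂ) * ∑ t ∈ Finset.powersetCard (m + 1) (Finset.univ : Finset (Fin Nb)), F t := by
  have step1 : ∀ i : Fin Nb,
      (∑ r ∈ Finset.powersetCard m (Finset.univ : Finset (Fin Nb)),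
        (if i ∈ r then 0 else F (insert i r))) =
      ∑ t ∈ (Finset.powersetCard (m + 1) (Finset.univ : Finset (Fin Nb))).filter (i ∈ ·),
        F t := by
    intro i
    rw [← Finset.sum_filter_add_sum_filter_not
      (Finset.powersetCard m (Finset.univ : Finset (Fin Nb))) (i ∈ ·)]
    have h0 : (∑ r ∈ (Finset.powersetCard m (Finset.univ : Finset (Fin Nb))).filter (i ∈ ·),
        (if i ∈ r then 0 else F (insert i r))) = 0 := by
      refine Finset.sum_eq_zero fun r hr => ?_
      rw [if_pos (Finset.mem_filter.1 hr).2]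
    rw [h0, zero_add]
    refine Finset.sum_nbij' (fun r => insert i r) (fun t => t.erase i) ?_ ?_ ?_ ?_ ?_
    · intro r hr
      simp only [Finset.mem_filter, Finset.mem_powersetCard_univ] at hr ⊢
      exact ⟨by rw [Finset.card_insert_of_notMem hr.2, hr.1], Finset.mem_insert_self _ _⟩
    · intro t ht
      simp only [Finset.mem_filter, Finset.mem_powersetCard_univ] at ht ⊢
      refine ⟨?_, Finset.notMem_erase _ _⟩
      rw [Finset.card_erase_of_mem ht.2, ht.1]
      omega
    · intro r hr
      simp only [Finset.mem_filter, Finset.mem_powersetCard_univ] at hr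
      exact Finset.erase_insert hr.2
    · intro t ht
      simp only [Finset.mem_filter, Finset.mem_powersetCard_univ] at ht
      exact Finset.insert_erase ht.2
    · intro r hr
      simp only [Finset.mem_filter, Finset.mem_powersetCard_univ] at hr
      rw [if_neg hr.2]
  simp only [step1]
  simp only [Finset.sum_filter]
  rw [Finset.sum_comm]
  rw [Finset.mul_sum]
  refine Finset.sum_congr rfl fun t ht => ?_
  rw [Finset.mem_powersetCard_univ] at ht
  have : (∑ i : Fin Nb, if i ∈ t then F t else 0) =
      (Finset.univ.filter (· ∈ t)).card • F t := by
    rw [← Finset.sum_filter, Finset.sum_const]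
  rw [this, Finset.filter_univ_mem, ht, nsmul_eq_mul]
  push_cast
  ring

lemma conj_sd_sign (p : ℕ) (z : ℂ) :
    (starRingEnd ℂ) ((-1 : ℂ) ^ p * z) = (-1 : ℂ) ^ p * (starRingEnd ℂ) z := by
  rw [_root_.map_mul, _root_.map_pow, _root_.map_neg, _root_.map_one]

/-- Gram orthonormality of Slater determinants (Cauchy–Binet for a unitary matrix). -/
lemma gram (U : Matrix (Fin Nb) (Fin Nb) ℂ) (hU : Uᴴ * U = 1) :
    ∀ (m : ℕ) (A B : Finset (Fin Nb)), A.card = m → B.card = m →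
    (∑ t ∈ Finset.powersetCard m (Finset.univ : Finset (Fin Nb)),
      (starRingEnd ℂ) (sd U m A t) * sd U m B t) = if A = B then 1 else 0 := by
  intro m
  induction m with
  | zero =>
    intro A B hA hB
    rw [Finset.card_eq_zero] at hA hB
    subst hA; subst hB
    rw [Finset.powersetCard_zero, Finset.sum_singleton, if_pos rfl]
    rw [sd_eq U (Finset.card_empty) (Finset.card_empty)]
    rw [Matrix.det_isEmpty, _root_.map_one, one_mul]
  | succ m ih =>
    intro A B hA hB
    set P := Finset.powersetCard m (Finset.univ : Finset (Fin Nb)) with hP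
    set G := ∑ t ∈ Finset.powersetCard (m + 1) (Finset.univ : Finset (Fin Nb)),
      (starRingEnd ℂ) (sd U (m + 1) A t) * sd U (m + 1) B t with hG
    set S := ∑ i : Fin Nb, ∑ r ∈ P,
      (starRingEnd ℂ) (ann U m A i r) * ann U m B i r with hS
    have hE1 : S = (m + 1 : ℂ) * G := by
      rw [hS, hG, ← sum_insert_reparam (fun t =>
        (starRingEnd ℂ) (sd U (m + 1) A t) * sd U (m + 1) B t)]
      refine Finset.sum_congr rfl fun i _ => Finset.sum_congr rfl fun r hr => ?_
      by_cases hir : i ∈ r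
      · rw [if_pos hir, ann, if_pos hir, map_zero, zero_mul]
      · rw [if_neg hir, ann, if_neg hir, ann, if_neg hir, conj_sd_sign]
        have : ((-1 : ℂ) ^ pos r i) * ((-1 : ℂ) ^ pos r i) = 1 := by
          rw [← pow_add, ← two_mul, pow_mul, neg_one_sq, one_pow]
        calc (-1 : ℂ) ^ pos r i * (starRingEnd ℂ) (sd U (m + 1) A (insert i r)) *
              ((-1 : ℂ) ^ pos r i * sd U (m + 1) B (insert i r))
            = ((-1 : ℂ) ^ pos r i * (-1 : ℂ) ^ pos r i) *
              ((starRingEnd ℂ) (sd U (m + 1) A (insert i r)) * sd U (m + 1) B (insert i r)) := by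
              ring
          _ = _ := by rw [this, one_mul]
    have hE2 : S = if A = B then (m + 1 : ℂ) else 0 := by
      have hterm : ∀ (i : Fin Nb) (r : Finset (Fin Nb)), r ∈ P →
          (starRingEnd ℂ) (ann U m A i r) * ann U m B i r =
          ∑ a : Fin (m + 1), ∑ b : Fin (m + 1),
            ((-1 : ℂ) ^ ((a : ℕ) + (b : ℕ)) *
              ((starRingEnd ℂ) (U i (A.orderEmbOfFin hA a)) * U i (B.orderEmbOfFin hB b)) *
              ((starRingEnd ℂ) (sd U m (A.erase (A.orderEmbOfFin hA a)) r) *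
                sd U m (B.erase (B.orderEmbOfFin hB b)) r)) := by
        intro i r hr
        rw [Finset.mem_powersetCard_univ] at hr
        rw [ann_eq U hA hr i, ann_eq U hB hr i, map_sum, Finset.sum_mul_sum]
        refine Finset.sum_congr rfl fun a _ => Finset.sum_congr rfl fun b _ => ?_
        rw [_root_.map_mul, _root_.map_mul, _root_.map_pow, _root_.map_neg, _root_.map_one,
          pow_add]
        ring
      calc S = ∑ i : Fin Nb, ∑ r ∈ P, ∑ a : Fin (m + 1), ∑ b : Fin (m + 1),
            ((-1 : ℂ) ^ ((a : ℕ) + (b : ℕ)) *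
              ((starRingEnd ℂ) (U i (A.orderEmbOfFin hA a)) * U i (B.orderEmbOfFin hB b)) *
              ((starRingEnd ℂ) (sd U m (A.erase (A.orderEmbOfFin hA a)) r) *
                sd U m (B.erase (B.orderEmbOfFin hB b)) r)) := by
            rw [hS]
            exact Finset.sum_congr rfl fun i _ => Finset.sum_congr rfl fun r hr => hterm i r hr
        _ = ∑ a : Fin (m + 1), ∑ b : Fin (m + 1), ∑ i : Fin Nb, ∑ r ∈ P,
            ((-1 : ℂ) ^ ((a : ℕ) + (b : ℕ)) *
              ((starRingEnd ℂ) (U i (A.orderEmbOfFin hA a)) * U i (B.orderEmbOfFin hB b)) *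
              ((starRingEnd ℂ) (sd U m (A.erase (A.orderEmbOfFin hA a)) r) *
                sd U m (B.erase (B.orderEmbOfFin hB b)) r)) := by
            rw [show (∑ i : Fin Nb, ∑ r ∈ P, ∑ a : Fin (m + 1), ∑ b : Fin (m + 1),
                ((-1 : ℂ) ^ ((a : ℕ) + (b : ℕ)) *
                ((starRingEnd ℂ) (U i (A.orderEmbOfFin hA a)) * U i (B.orderEmbOfFin hB b)) *
                ((starRingEnd ℂ) (sd U m (A.erase (A.orderEmbOfFin hA a)) r) *
                  sd U m (B.erase (B.orderEmbOfFin hB b)) r))) =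
              ∑ i : Fin Nb, ∑ a : Fin (m + 1), ∑ r ∈ P, ∑ b : Fin (m + 1), _ from
              Finset.sum_congr rfl fun i _ => Finset.sum_comm, Finset.sum_comm]
            refine Finset.sum_congr rfl fun a _ => ?_
            rw [show (∑ i : Fin Nb, ∑ r ∈ P, ∑ b : Fin (m + 1),
                ((-1 : ℂ) ^ ((a : ℕ) + (b : ℕ)) *
                ((starRingEnd ℂ) (U i (A.orderEmbOfFin hA a)) * U i (B.orderEmbOfFin hB b)) *
                ((starRingEnd ℂ) (sd U m (A.erase (A.orderEmbOfFin hA a)) r) *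
                  sd U m (B.erase (B.orderEmbOfFin hB b)) r))) =
              ∑ i : Fin Nb, ∑ b : Fin (m + 1), ∑ r ∈ P, _ from
              Finset.sum_congr rfl fun i _ => Finset.sum_comm, Finset.sum_comm]
        _ = ∑ a : Fin (m + 1), ∑ b : Fin (m + 1),
            ((-1 : ℂ) ^ ((a : ℕ) + (b : ℕ)) *
              (if A.orderEmbOfFin hA a = B.orderEmbOfFin hB b then (1 : ℂ) else 0) *
              (if A.erase (A.orderEmbOfFin hA a) = B.erase (B.orderEmbOfFin hB b)
                then (1 : ℂ) else 0)) := by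
            refine Finset.sum_congr rfl fun a _ => Finset.sum_congr rfl fun b _ => ?_
            have hUe : (∑ i : Fin Nb,
                (starRingEnd ℂ) (U i (A.orderEmbOfFin hA a)) * U i (B.orderEmbOfFin hB b)) =
                (if A.orderEmbOfFin hA a = B.orderEmbOfFin hB b then (1 : ℂ) else 0) := by
              have h := congrFun (congrFun hU (A.orderEmbOfFin hA a)) (B.orderEmbOfFin hB b)
              rw [Matrix.mul_apply] at h
              simp only [Matrix.conjTranspose_apply] at h
              simp only [starRingEnd_apply]
              rw [h, Matrix.one_apply]
            have hGe : (∑ r ∈ P,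
                (starRingEnd ℂ) (sd U m (A.erase (A.orderEmbOfFin hA a)) r) *
                  sd U m (B.erase (B.orderEmbOfFin hB b)) r) =
                (if A.erase (A.orderEmbOfFin hA a) = B.erase (B.orderEmbOfFin hB b)
                  then (1 : ℂ) else 0) := by
              refine ih _ _ ?_ ?_
              · rw [Finset.card_erase_of_mem (A.orderEmbOfFin_mem hA a), hA]; omega
              · rw [Finset.card_erase_of_mem (B.orderEmbOfFin_mem hB b), hB]; omega
            calc (∑ i : Fin Nb, ∑ r ∈ P, ((-1 : ℂ) ^ ((a : ℕ) + (b : ℕ)) *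
                  ((starRingEnd ℂ) (U i (A.orderEmbOfFin hA a)) * U i (B.orderEmbOfFin hB b)) *
                  ((starRingEnd ℂ) (sd U m (A.erase (A.orderEmbOfFin hA a)) r) *
                    sd U m (B.erase (B.orderEmbOfFin hB b)) r)))
                = (-1 : ℂ) ^ ((a : ℕ) + (b : ℕ)) *
                  ((∑ i : Fin Nb,
                    (starRingEnd ℂ) (U i (A.orderEmbOfFin hA a)) * U i (B.orderEmbOfFin hB b)) *
                  (∑ r ∈ P,
                    (starRingEnd ℂ) (sd U m (A.erase (A.orderEmbOfFin hA a)) r) *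
                      sd U m (B.erase (B.orderEmbOfFin hB b)) r)) := by
                  rw [Finset.sum_mul_sum, Finset.mul_sum]
                  refine Finset.sum_congr rfl fun i _ => ?_
                  rw [Finset.mul_sum]
                  refine Finset.sum_congr rfl fun r _ => by ring
              _ = _ := by rw [hUe, hGe]; ring
      by_cases hAB : A = B
      · subst hAB
        rw [if_pos rfl]
        have hsum : ∀ a b : Fin (m + 1),
            ((-1 : ℂ) ^ ((a : ℕ) + (b : ℕ)) *
              (if A.orderEmbOfFin hA a = A.orderEmbOfFin hB b then (1 : ℂ) else 0) *
              (if A.erase (A.orderEmbOfFin hA a) = A.erase (A.orderEmbOfFin hB b)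
                then (1 : ℂ) else 0)) = if a = b then 1 else 0 := by
          intro a b
          have hBA : A.orderEmbOfFin hB = A.orderEmbOfFin hA := rfl
          by_cases hab : a = b
          · subst hab
            rw [hBA, if_pos rfl, if_pos rfl, mul_one, mul_one, if_pos rfl, ← two_mul,
              pow_mul, neg_one_sq, one_pow]
          · rw [hBA, if_neg (fun h => hab ((A.orderEmbOfFin hA).injective h)), mul_zero,
              zero_mul, if_neg hab]
        calc (∑ a : Fin (m + 1), ∑ b : Fin (m + 1),
              ((-1 : ℂ) ^ ((a : ℕ) + (b : ℕ)) *
              (if A.orderEmbOfFin hA a = A.orderEmbOfFin hB b then (1 : ℂ) else 0) *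
              (if A.erase (A.orderEmbOfFin hA a) = A.erase (A.orderEmbOfFin hB b)
                then (1 : ℂ) else 0)))
            = ∑ a : Fin (m + 1), ∑ b : Fin (m + 1), (if a = b then (1 : ℂ) else 0) := by
              exact Finset.sum_congr rfl fun a _ => Finset.sum_congr rfl fun b _ => hsum a b
          _ = ∑ _a : Fin (m + 1), (1 : ℂ) := by
              refine Finset.sum_congr rfl fun a _ => ?_
              rw [Finset.sum_ite_eq Finset.univ a (fun _ => (1 : ℂ)), if_pos (Finset.mem_univ a)]
          _ = (m + 1 : ℂ) := by
              rw [Finset.sum_const, Finset.card_univ, Fintype.card_fin, nsmul_eq_mul]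
              push_cast; ring
      · rw [if_neg hAB]
        refine Finset.sum_eq_zero fun a _ => Finset.sum_eq_zero fun b _ => ?_
        by_cases h2 : A.erase (A.orderEmbOfFin hA a) = B.erase (B.orderEmbOfFin hB b)
        · by_cases h1 : A.orderEmbOfFin hA a = B.orderEmbOfFin hB b
          · exfalso
            apply hAB
            have hmA := Finset.insert_erase (A.orderEmbOfFin_mem hA a)
            have hmB := Finset.insert_erase (B.orderEmbOfFin_mem hB b)
            rw [← hmA, h2, h1, hmB]
          · rw [if_neg h1, mul_zero, zero_mul]
        · rw [if_neg h2, mul_zero]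
    have hm1 : (m + 1 : ℂ) ≠ 0 := by
      have := Nat.cast_add_one_ne_zero (R := ℂ) m
      exact_mod_cast this
    have key : (m + 1 : ℂ) * G = (m + 1 : ℂ) * (if A = B then 1 else 0) := by
      rw [← hE1, hE2]
      by_cases hAB : A = B <;> simp [hAB]
    exact mul_left_cancel₀ hm1 key

lemma sum_config {m : ℕ} (f : Finset (Fin Nb) → ℂ) :
    (∑ t : FConfig Nb m, f t.1) =
      ∑ t ∈ Finset.powersetCard m (Finset.univ : Finset (Fin Nb)), f t :=
  (Finset.sum_subtype _ (fun x => Finset.mem_powersetCard_univ) f).symm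

/-- The 1RDM of a single Slater determinant built from the columns `p` of `U`. -/
lemma slater_gamma (U : Matrix (Fin Nb) (Fin Nb) ℂ) (hU : Uᴴ * U = 1) {N : ℕ}
    (p : Finset (Fin Nb)) (hp : p.card = N) (i j : Fin Nb) :
    (∑ y : FConfig Nb N, ∑ x : FConfig Nb N,
      sd U N p x.1 * (starRingEnd ℂ) (sd U N p y.1) * fOp j i y x) =
    ∑ k ∈ p, U i k * (starRingEnd ℂ) (U j k) := by
  cases N with
  | zero =>
    rw [Finset.card_eq_zero] at hp
    subst hp
    rw [Finset.sum_empty]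
    refine Finset.sum_eq_zero fun y _ => Finset.sum_eq_zero fun x _ => ?_
    have hx : x.1 = ∅ := Finset.card_eq_zero.1 x.2
    rw [fOp, if_neg, mul_zero]
    rw [hx]
    rintro ⟨h1, -, -⟩
    exact absurd h1 (Finset.notMem_empty _)
  | succ m =>
    set P := Finset.powersetCard m (Finset.univ : Finset (Fin Nb)) with hPdef
    -- Step 1: reduce to a sum over (m)-configurations via annihilation operators
    have step1 : (∑ y : FConfig Nb (m + 1), ∑ x : FConfig Nb (m + 1),
        sd U (m + 1) p x.1 * (starRingEnd ℂ) (sd U (m + 1) p y.1) * fOp j i y x) =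
        ∑ r ∈ P, ann U m p i r * (starRingEnd ℂ) (ann U m p j r) := by
      rw [Finset.sum_comm]
      have hx1 : ∀ x : FConfig Nb (m + 1),
          (∑ y : FConfig Nb (m + 1),
            sd U (m + 1) p x.1 * (starRingEnd ℂ) (sd U (m + 1) p y.1) * fOp j i y x) =
          if i ∈ x.1 ∧ (j = i ∨ j ∉ x.1) then
            sd U (m + 1) p x.1 *
              (starRingEnd ℂ) (sd U (m + 1) p (insert j (x.1.erase i))) *
              (-1 : ℂ) ^ ((x.1.filter (fun k => k < i)).card +
                ((x.1.erase i).filter (fun k => k < j)).card)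
          else 0 := by
        intro x
        by_cases hc : i ∈ x.1 ∧ (j = i ∨ j ∉ x.1)
        · rw [if_pos hc]
          have hycard : (insert j (x.1.erase i)).card = m + 1 := by
            have h1 : (x.1.erase i).card = m := by
              rw [Finset.card_erase_of_mem hc.1, x.2]; omega
            have h2 : j ∉ x.1.erase i := by
              rcases hc.2 with rfl | hj
              · exact Finset.notMem_erase _ _
              · exact fun h => hj (Finset.mem_of_mem_erase h)
            rw [Finset.card_insert_of_notMem h2, h1]
          refine Finset.sum_eq_single_of_mem (⟨insert j (x.1.erase i), hycard⟩ : FConfig Nb (m + 1))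
            (Finset.mem_univ _) ?_ |>.trans ?_
          · intro y _ hy
            rw [fOp, if_neg, mul_zero]
            rintro ⟨-, -, h3⟩
            exact hy (Subtype.ext h3)
          · rw [fOp, if_pos ⟨hc.1, hc.2, rfl⟩]
        · rw [if_neg hc]
          refine Finset.sum_eq_zero fun y _ => ?_
          rw [fOp, if_neg, mul_zero]
          rintro ⟨h1, h2, -⟩
          exact hc ⟨h1, h2⟩
      simp only [hx1]
      -- now a sum over x with a guard; reindex by r = x.erase i
      rw [sum_config (fun x => if i ∈ x ∧ (j = i ∨ j ∉ x) then
        sd U (m + 1) p x *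
          (starRingEnd ℂ) (sd U (m + 1) p (insert j (x.erase i))) *
          (-1 : ℂ) ^ ((x.filter (fun k => k < i)).card +
            ((x.erase i).filter (fun k => k < j)).card)
        else 0)]
      rw [← Finset.sum_filter]
      symm
      rw [← Finset.sum_filter_add_sum_filter_not P (fun r => i ∉ r ∧ j ∉ r)]
      have hz : (∑ r ∈ P.filter (fun r => ¬(i ∉ r ∧ j ∉ r)),
          ann U m p i r * (starRingEnd ℂ) (ann U m p j r)) = 0 := by
        refine Finset.sum_eq_zero fun r hr => ?_
        rw [Finset.mem_filter] at hr
        rcases not_and_or.1 hr.2 with h | h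
        · have h0 : ann U m p i r = 0 := by rw [ann, if_pos (not_not.1 h)]
          rw [h0, zero_mul]
        · have h0 : ann U m p j r = 0 := by rw [ann, if_pos (not_not.1 h)]
          rw [h0, _root_.map_zero, mul_zero]
      rw [hz, add_zero]
      refine Finset.sum_nbij' (fun r => insert i r) (fun x => x.erase i) ?_ ?_ ?_ ?_ ?_
      · intro r hr
        simp only [hPdef, Finset.mem_filter, Finset.mem_powersetCard_univ] at hr ⊢
        refine ⟨by rw [Finset.card_insert_of_notMem hr.2.1, hr.1], Finset.mem_insert_self _ _, ?_⟩
        by_cases hji : j = i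
        · exact Or.inl hji
        · refine Or.inr fun hj => ?_
          rcases Finset.mem_insert.1 hj with h | h
          · exact hji h
          · exact hr.2.2 h
      · intro x hx
        simp only [hPdef, Finset.mem_filter, Finset.mem_powersetCard_univ] at hx ⊢
        refine ⟨by rw [Finset.card_erase_of_mem hx.2.1, hx.1, Nat.add_sub_cancel],
          Finset.notMem_erase _ _, ?_⟩
        rcases hx.2.2 with rfl | hj
        · exact Finset.notMem_erase _ _
        · exact fun h => hj (Finset.mem_of_mem_erase h)
      · intro r hr
        simp only [hPdef, Finset.mem_filter, Finset.mem_powersetCard_univ] at hr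
        exact Finset.erase_insert hr.2.1
      · intro x hx
        simp only [hPdef, Finset.mem_filter, Finset.mem_powersetCard_univ] at hx
        exact Finset.insert_erase hx.2.1
      · intro r hr
        simp only [hPdef, Finset.mem_filter, Finset.mem_powersetCard_univ] at hr
        obtain ⟨hrc, hir, hjr⟩ := hr
        rw [ann, if_neg hir, ann, if_neg hjr, Finset.erase_insert hir]
        have hfi : ((insert i r).filter (fun k => k < i)).card = pos r i := by
          rw [Finset.filter_insert, if_neg (lt_irrefl i)]
          rfl
        rw [hfi]
        have hpj : (Finset.filter (fun k => k < j) r).card = pos r j := rfl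
        rw [hpj, conj_sd_sign, pow_add]
        ring
    rw [step1]
    -- Step 2: expand via ann_eq and use the Gram lemma
    have step2 : (∑ r ∈ P, ann U m p i r * (starRingEnd ℂ) (ann U m p j r)) =
        ∑ a : Fin (m + 1), U i (p.orderEmbOfFin hp a) * (starRingEnd ℂ) (U j (p.orderEmbOfFin hp a)) := by
      have hterm : ∀ r ∈ P, ann U m p i r * (starRingEnd ℂ) (ann U m p j r) =
          ∑ a : Fin (m + 1), ∑ b : Fin (m + 1),
            ((-1 : ℂ) ^ ((a : ℕ) + (b : ℕ)) *
              (U i (p.orderEmbOfFin hp a) * (starRingEnd ℂ) (U j (p.orderEmbOfFin hp b))) *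
              (sd U m (p.erase (p.orderEmbOfFin hp a)) r *
                (starRingEnd ℂ) (sd U m (p.erase (p.orderEmbOfFin hp b)) r))) := by
        intro r hr
        rw [Finset.mem_powersetCard_univ] at hr
        rw [ann_eq U hp hr i, ann_eq U hp hr j, _root_.map_sum, Finset.sum_mul_sum]
        refine Finset.sum_congr rfl fun a _ => Finset.sum_congr rfl fun b _ => ?_
        rw [_root_.map_mul, _root_.map_mul, _root_.map_pow, _root_.map_neg, _root_.map_one,
          pow_add]
        ring
      have hfac : ∀ a b : Fin (m + 1), (∑ r ∈ P,
          ((-1 : ℂ) ^ ((a : ℕ) + (b : ℕ)) *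
            (U i (p.orderEmbOfFin hp a) * (starRingEnd ℂ) (U j (p.orderEmbOfFin hp b))) *
            (sd U m (p.erase (p.orderEmbOfFin hp a)) r *
              (starRingEnd ℂ) (sd U m (p.erase (p.orderEmbOfFin hp b)) r)))) =
          if a = b then U i (p.orderEmbOfFin hp a) *
            (starRingEnd ℂ) (U j (p.orderEmbOfFin hp b)) else 0 := by
        intro a b
        rw [← Finset.mul_sum]
        have hgr : (∑ r ∈ P, sd U m (p.erase (p.orderEmbOfFin hp a)) r *
            (starRingEnd ℂ) (sd U m (p.erase (p.orderEmbOfFin hp b)) r)) =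
            if a = b then 1 else 0 := by
          have hca : (p.erase (p.orderEmbOfFin hp a)).card = m := by
            rw [Finset.card_erase_of_mem (p.orderEmbOfFin_mem hp a), hp]; omega
          have hcb : (p.erase (p.orderEmbOfFin hp b)).card = m := by
            rw [Finset.card_erase_of_mem (p.orderEmbOfFin_mem hp b), hp]; omega
          have := gram U hU m (p.erase (p.orderEmbOfFin hp b))
            (p.erase (p.orderEmbOfFin hp a)) hcb hca
          rw [show (∑ r ∈ P, sd U m (p.erase (p.orderEmbOfFin hp a)) r *
              (starRingEnd ℂ) (sd U m (p.erase (p.orderEmbOfFin hp b)) r)) =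
            ∑ r ∈ P, (starRingEnd ℂ) (sd U m (p.erase (p.orderEmbOfFin hp b)) r) *
              sd U m (p.erase (p.orderEmbOfFin hp a)) r from
            Finset.sum_congr rfl fun r _ => mul_comm _ _, this]
          have hiff : (p.erase (p.orderEmbOfFin hp b) = p.erase (p.orderEmbOfFin hp a)) ↔
              a = b := by
            constructor
            · intro h
              by_contra hab
              have hne : p.orderEmbOfFin hp b ≠ p.orderEmbOfFin hp a :=
                fun he => hab ((p.orderEmbOfFin hp).injective he).symm
              have : p.orderEmbOfFin hp a ∈ p.erase (p.orderEmbOfFin hp b) :=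
                Finset.mem_erase.2 ⟨fun he => hne he.symm, p.orderEmbOfFin_mem hp a⟩
              rw [h] at this
              exact (Finset.notMem_erase _ _) this
            · rintro rfl; rfl
          rw [if_congr hiff rfl rfl]
        rw [hgr]
        by_cases hab : a = b
        · subst hab
          rw [if_pos rfl, if_pos rfl, mul_one, ← two_mul, pow_mul, neg_one_sq, one_pow, one_mul]
        · rw [if_neg hab, if_neg hab, mul_zero]
      calc (∑ r ∈ P, ann U m p i r * (starRingEnd ℂ) (ann U m p j r))
          = ∑ r ∈ P, ∑ a : Fin (m + 1), ∑ b : Fin (m + 1),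
            ((-1 : ℂ) ^ ((a : ℕ) + (b : ℕ)) *
              (U i (p.orderEmbOfFin hp a) * (starRingEnd ℂ) (U j (p.orderEmbOfFin hp b))) *
              (sd U m (p.erase (p.orderEmbOfFin hp a)) r *
                (starRingEnd ℂ) (sd U m (p.erase (p.orderEmbOfFin hp b)) r))) :=
          Finset.sum_congr rfl hterm
        _ = ∑ a : Fin (m + 1), ∑ r ∈ P, ∑ b : Fin (m + 1),
            ((-1 : ℂ) ^ ((a : ℕ) + (b : ℕ)) *
              (U i (p.orderEmbOfFin hp a) * (starRingEnd ℂ) (U j (p.orderEmbOfFin hp b))) *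
              (sd U m (p.erase (p.orderEmbOfFin hp a)) r *
                (starRingEnd ℂ) (sd U m (p.erase (p.orderEmbOfFin hp b)) r))) :=
          Finset.sum_comm
        _ = ∑ a : Fin (m + 1), ∑ b : Fin (m + 1), ∑ r ∈ P,
            ((-1 : ℂ) ^ ((a : ℕ) + (b : ℕ)) *
              (U i (p.orderEmbOfFin hp a) * (starRingEnd ℂ) (U j (p.orderEmbOfFin hp b))) *
              (sd U m (p.erase (p.orderEmbOfFin hp a)) r *
                (starRingEnd ℂ) (sd U m (p.erase (p.orderEmbOfFin hp b)) r))) :=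
          Finset.sum_congr rfl fun a _ => Finset.sum_comm
        _ = ∑ a : Fin (m + 1),
            U i (p.orderEmbOfFin hp a) * (starRingEnd ℂ) (U j (p.orderEmbOfFin hp a)) := by
          refine Finset.sum_congr rfl fun a _ => ?_
          rw [Finset.sum_congr rfl fun b _ => hfac a b,
            Finset.sum_ite_eq Finset.univ a
              (fun b => U i (p.orderEmbOfFin hp a) * (starRingEnd ℂ) (U j (p.orderEmbOfFin hp b))),
            if_pos (Finset.mem_univ a)]
    rw [step2]
    -- Step 3: reindex the sum over `Fin (m+1)` as a sum over the elements of `p`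
    refine Finset.sum_bij (fun a _ => p.orderEmbOfFin hp a) ?_ ?_ ?_ ?_
    · intro a _; exact p.orderEmbOfFin_mem hp a
    · intro a _ b _ h; exact (p.orderEmbOfFin hp).injective h
    · intro k hk
      have : k ∈ Set.range (p.orderEmbOfFin hp) := by
        rw [Finset.range_orderEmbOfFin]; exact hk
      obtain ⟨a, ha⟩ := this
      exact ⟨a, Finset.mem_univ a, ha⟩
    · intro a _; rfl

/-- The combinatorial core: every occupation-number vector is a convex combination of
0/1 configurations. Induction on the number of fractional entries. -/
lemma occupation (N : ℕ) :
    ∀ k : ℕ, ∀ n : Fin Nb → ℝ,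
      (Finset.univ.filter (fun i => n i ≠ 0 ∧ n i ≠ 1)).card ≤ k →
      (∀ i, 0 ≤ n i ∧ n i ≤ 1) → (∑ i, n i) = N →
      ∃ μ : FConfig Nb N → ℝ, (∀ s, 0 ≤ μ s) ∧ (∑ s, μ s) = 1 ∧
        ∀ i, n i = ∑ s, μ s * (if i ∈ s.1 then 1 else 0) := by
  intro k
  induction k with
  | zero =>
    intro n hcard hbd hsum
    rw [Nat.le_zero, Finset.card_eq_zero, Finset.filter_eq_empty_iff] at hcard
    have h01 : ∀ i, n i = 0 ∨ n i = 1 := by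
      intro i
      have := hcard (Finset.mem_univ i)
      by_cases h0 : n i = 0
      · exact Or.inl h0
      · exact Or.inr (by by_contra h1; exact this ⟨h0, h1⟩)
    set s := Finset.univ.filter (fun i => n i = 1) with hs
    have hns : ∀ i, n i = if i ∈ s then 1 else 0 := by
      intro i
      by_cases hi : i ∈ s
      · rw [if_pos hi]; exact (Finset.mem_filter.1 hi).2
      · rw [if_neg hi]
        rcases h01 i with h | h
        · exact h
        · exact absurd (Finset.mem_filter.2 ⟨Finset.mem_univ i, h⟩) hi
    have hcards : s.card = N := by
      have : (∑ i, n i) = (s.card : ℝ) := by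
        rw [Finset.sum_congr rfl (fun i _ => hns i), Finset.sum_ite_mem,
          Finset.univ_inter, Finset.sum_const, nsmul_eq_mul, mul_one]
      rw [this] at hsum
      exact_mod_cast hsum
    refine ⟨fun t => if t = ⟨s, hcards⟩ then 1 else 0, fun t => by positivity, ?_, ?_⟩
    · rw [Finset.sum_ite_eq' Finset.univ (⟨s, hcards⟩ : FConfig Nb N) (fun _ => (1 : ℝ)),
        if_pos (Finset.mem_univ _)]
    · intro i
      have : (∑ t : FConfig Nb N, (if t = ⟨s, hcards⟩ then (1 : ℝ) else 0) *
          (if i ∈ t.1 then 1 else 0)) =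
          ∑ t : FConfig Nb N, (if t = ⟨s, hcards⟩ then (if i ∈ s then (1 : ℝ) else 0) else 0) := by
        refine Finset.sum_congr rfl fun t _ => ?_
        by_cases ht : t = ⟨s, hcards⟩
        · subst ht; rw [if_pos rfl, if_pos rfl, one_mul]
        · rw [if_neg ht, if_neg ht, zero_mul]
      rw [this, Finset.sum_ite_eq' Finset.univ (⟨s, hcards⟩ : FConfig Nb N),
        if_pos (Finset.mem_univ _), hns i]
  | succ k ih =>
    intro n hcard hbd hsum
    by_cases hk : (Finset.univ.filter (fun i => n i ≠ 0 ∧ n i ≠ 1)).card ≤ k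
    · exact ih n hk hbd hsum
    push_neg at hk
    set F := Finset.univ.filter (fun i => n i ≠ 0 ∧ n i ≠ 1) with hF
    -- there must be at least two fractional entries
    have hF2 : 1 < F.card := by
      rcases lt_or_ge 1 F.card with h | h
      · exact h
      · exfalso
        have h1 : F.card = 1 := by omega
        obtain ⟨i, hFi⟩ := Finset.card_eq_one.1 h1
        have hifrac : n i ≠ 0 ∧ n i ≠ 1 := by
          have : i ∈ F := hFi ▸ Finset.mem_singleton_self i
          exact (Finset.mem_filter.1 this).2
        have hothers : ∀ x, x ≠ i → n x = 0 ∨ n x = 1 := by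
          intro x hx
          by_contra hfr
          push_neg at hfr
          have : x ∈ F := Finset.mem_filter.2 ⟨Finset.mem_univ x, hfr.1,
            fun h1 => (hfr.2 h1).elim⟩
          rw [hFi, Finset.mem_singleton] at this
          exact hx this
        have hi01 : 0 < n i ∧ n i < 1 :=
          ⟨lt_of_le_of_ne (hbd i).1 (Ne.symm hifrac.1), lt_of_le_of_ne (hbd i).2 hifrac.2⟩
        set c := (Finset.univ.erase i).filter (fun x => n x = 1) with hc
        have hsplit : (∑ x, n x) = n i + ∑ x ∈ Finset.univ.erase i, n x :=
          (Finset.add_sum_erase _ _ (Finset.mem_univ i)).symm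
        have hrest : (∑ x ∈ Finset.univ.erase i, n x) = (c.card : ℝ) := by
          rw [← Finset.sum_filter_add_sum_filter_not (Finset.univ.erase i) (fun x => n x = 1)]
          have h1 : (∑ x ∈ (Finset.univ.erase i).filter (fun x => n x = 1), n x) =
              (c.card : ℝ) := by
            rw [Finset.sum_congr rfl (fun x hx => (Finset.mem_filter.1 hx).2),
              Finset.sum_const, nsmul_eq_mul, mul_one, hc]
          have h0 : (∑ x ∈ (Finset.univ.erase i).filter (fun x => ¬ n x = 1), n x) = 0 := by
            refine Finset.sum_eq_zero fun x hx => ?_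
            obtain ⟨hxe, hx1⟩ := Finset.mem_filter.1 hx
            rcases hothers x (Finset.ne_of_mem_erase hxe) with h | h
            · exact h
            · exact absurd h hx1
          rw [h1, h0, add_zero]
        have hni : n i = (N : ℝ) - c.card := by
          rw [hsplit, hrest] at hsum; linarith
        rcases le_or_gt N c.card with hcc | hcc
        · have : (N : ℝ) ≤ (c.card : ℝ) := by exact_mod_cast hcc
          linarith [hi01.1]
        · have : (c.card : ℝ) + 1 ≤ (N : ℝ) := by exact_mod_cast hcc
          linarith [hi01.2]
    obtain ⟨i, hiF, j, hjF, hij⟩ := Finset.one_lt_card.1 hF2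
    have hi : 0 < n i ∧ n i < 1 := by
      obtain ⟨h0, h1⟩ := (Finset.mem_filter.1 hiF).2
      exact ⟨lt_of_le_of_ne (hbd i).1 (Ne.symm h0), lt_of_le_of_ne (hbd i).2 h1⟩
    have hj : 0 < n j ∧ n j < 1 := by
      obtain ⟨h0, h1⟩ := (Finset.mem_filter.1 hjF).2
      exact ⟨lt_of_le_of_ne (hbd j).1 (Ne.symm h0), lt_of_le_of_ne (hbd j).2 h1⟩
    set t₁ := min (1 - n i) (n j) with ht₁def
    set t₂ := min (n i) (1 - n j) with ht₂def
    have ht₁ : 0 < t₁ := lt_min (by linarith [hi.2]) hj.1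
    have ht₂ : 0 < t₂ := lt_min hi.1 (by linarith [hj.2])
    set np := fun x => if x = i then n i + t₁ else if x = j then n j - t₁ else n x with hnp
    set nm := fun x => if x = i then n i - t₂ else if x = j then n j + t₂ else n x with hnm
    set lam := t₂ / (t₁ + t₂) with hlam
    have hlam0 : 0 ≤ lam := by positivity
    have hlam1 : lam ≤ 1 := by
      rw [hlam, div_le_one (by linarith)]; linarith
    have hconv : ∀ x, n x = lam * np x + (1 - lam) * nm x := by
      intro x
      simp only [hnp, hnm, hlam]
      by_cases hx : x = i
      · subst hx
        rw [if_pos rfl, if_pos rfl]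
        field_simp
        ring
      · rw [if_neg hx, if_neg hx]
        by_cases hxj : x = j
        · subst hxj
          rw [if_pos rfl, if_pos rfl]
          field_simp
          ring
        · rw [if_neg hxj, if_neg hxj]
          field_simp
          ring
    -- bounds
    have hbdp : ∀ x, 0 ≤ np x ∧ np x ≤ 1 := by
      intro x
      simp only [hnp]
      by_cases hx : x = i
      · rw [if_pos hx]
        constructor
        · linarith [hi.1, ht₁.le]
        · have := min_le_left (1 - n i) (n j); linarith
      · rw [if_neg hx]
        by_cases hxj : x = j
        · rw [if_pos hxj]
          constructor
          · have := min_le_right (1 - n i) (n j); linarith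
          · linarith [hj.2, ht₁.le]
        · rw [if_neg hxj]; exact hbd x
    have hbdm : ∀ x, 0 ≤ nm x ∧ nm x ≤ 1 := by
      intro x
      simp only [hnm]
      by_cases hx : x = i
      · rw [if_pos hx]
        constructor
        · have := min_le_left (n i) (1 - n j); linarith
        · linarith [hi.2, ht₂.le]
      · rw [if_neg hx]
        by_cases hxj : x = j
        · rw [if_pos hxj]
          constructor
          · linarith [hj.1, ht₂.le]
          · have := min_le_right (n i) (1 - n j); linarith
        · rw [if_neg hxj]; exact hbd x
    -- sums
    have hsump : (∑ x, np x) = N := by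
      have : ∀ x, np x = n x + (if x = i then t₁ else 0) - (if x = j then t₁ else 0) := by
        intro x
        simp only [hnp]
        by_cases hx : x = i
        · subst hx
          rw [if_pos rfl, if_pos rfl, if_neg hij]
          ring
        · rw [if_neg hx, if_neg hx]
          by_cases hxj : x = j
          · subst hxj
            rw [if_pos rfl, if_pos rfl]
            ring
          · rw [if_neg hxj, if_neg hxj]
            ring
      rw [Finset.sum_congr rfl fun x _ => this x, Finset.sum_sub_distrib,
        Finset.sum_add_distrib, Finset.sum_ite_eq' Finset.univ i (fun _ => t₁),
        Finset.sum_ite_eq' Finset.univ j (fun _ => t₁), if_pos (Finset.mem_univ i),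
        if_pos (Finset.mem_univ j), hsum]
      ring
    have hsumm : (∑ x, nm x) = N := by
      have : ∀ x, nm x = n x - (if x = i then t₂ else 0) + (if x = j then t₂ else 0) := by
        intro x
        simp only [hnm]
        by_cases hx : x = i
        · subst hx
          rw [if_pos rfl, if_pos rfl, if_neg hij]
          ring
        · rw [if_neg hx, if_neg hx]
          by_cases hxj : x = j
          · subst hxj
            rw [if_pos rfl, if_pos rfl]
            ring
          · rw [if_neg hxj, if_neg hxj]
            ring
      rw [Finset.sum_congr rfl fun x _ => this x, Finset.sum_add_distrib,
        Finset.sum_sub_distrib, Finset.sum_ite_eq' Finset.univ i (fun _ => t₂),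
        Finset.sum_ite_eq' Finset.univ j (fun _ => t₂), if_pos (Finset.mem_univ i),
        if_pos (Finset.mem_univ j), hsum]
      ring
    -- fractional sets shrink
    have hsubp : (Finset.univ.filter (fun x => np x ≠ 0 ∧ np x ≠ 1)).card ≤ k := by
      have hw : ∃ w ∈ F, (Finset.univ.filter (fun x => np x ≠ 0 ∧ np x ≠ 1)) ⊆ F.erase w := by
        have hsubF : ∀ x, (np x ≠ 0 ∧ np x ≠ 1) → x ∈ F := by
          intro x hx
          by_cases hxi : x = i
          · subst hxi; exact hiF
          · by_cases hxj : x = j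
            · subst hxj; exact hjF
            · refine Finset.mem_filter.2 ⟨Finset.mem_univ x, ?_⟩
              simp only [hnp] at hx
              rw [if_neg hxi, if_neg hxj] at hx
              exact hx
        rcases min_cases (1 - n i) (n j) with ⟨hmin, -⟩ | ⟨hmin, -⟩
        · refine ⟨i, hiF, fun x hx => ?_⟩
          obtain ⟨-, hfr⟩ := Finset.mem_filter.1 hx
          refine Finset.mem_erase.2 ⟨?_, hsubF x hfr⟩
          rintro rfl
          apply hfr.2
          have h1 : np x = n x + t₁ := by simp [hnp]
          rw [h1, ht₁def, hmin]
          ring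
        · refine ⟨j, hjF, fun x hx => ?_⟩
          obtain ⟨-, hfr⟩ := Finset.mem_filter.1 hx
          refine Finset.mem_erase.2 ⟨?_, hsubF x hfr⟩
          rintro rfl
          apply hfr.1
          have h1 : np x = n x - t₁ := by simp [hnp, Ne.symm hij]
          rw [h1, ht₁def, hmin]
          ring
      obtain ⟨w, hwF, hsub⟩ := hw
      calc (Finset.univ.filter (fun x => np x ≠ 0 ∧ np x ≠ 1)).card
          ≤ (F.erase w).card := Finset.card_le_card hsub
        _ = F.card - 1 := Finset.card_erase_of_mem hwF
        _ ≤ k := by omega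
    have hsubm : (Finset.univ.filter (fun x => nm x ≠ 0 ∧ nm x ≠ 1)).card ≤ k := by
      have hw : ∃ w ∈ F, (Finset.univ.filter (fun x => nm x ≠ 0 ∧ nm x ≠ 1)) ⊆ F.erase w := by
        have hsubF : ∀ x, (nm x ≠ 0 ∧ nm x ≠ 1) → x ∈ F := by
          intro x hx
          by_cases hxi : x = i
          · subst hxi; exact hiF
          · by_cases hxj : x = j
            · subst hxj; exact hjF
            · refine Finset.mem_filter.2 ⟨Finset.mem_univ x, ?_⟩
              simp only [hnm] at hx
              rw [if_neg hxi, if_neg hxj] at hx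
              exact hx
        rcases min_cases (n i) (1 - n j) with ⟨hmin, -⟩ | ⟨hmin, -⟩
        · refine ⟨i, hiF, fun x hx => ?_⟩
          obtain ⟨-, hfr⟩ := Finset.mem_filter.1 hx
          refine Finset.mem_erase.2 ⟨?_, hsubF x hfr⟩
          rintro rfl
          apply hfr.1
          have h1 : nm x = n x - t₂ := by simp [hnm]
          rw [h1, ht₂def, hmin]
          ring
        · refine ⟨j, hjF, fun x hx => ?_⟩
          obtain ⟨-, hfr⟩ := Finset.mem_filter.1 hx
          refine Finset.mem_erase.2 ⟨?_, hsubF x hfr⟩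
          rintro rfl
          apply hfr.2
          have h1 : nm x = n x + t₂ := by simp [hnm, Ne.symm hij]
          rw [h1, ht₂def, hmin]
          ring
      obtain ⟨w, hwF, hsub⟩ := hw
      calc (Finset.univ.filter (fun x => nm x ≠ 0 ∧ nm x ≠ 1)).card
          ≤ (F.erase w).card := Finset.card_le_card hsub
        _ = F.card - 1 := Finset.card_erase_of_mem hwF
        _ ≤ k := by omega
    obtain ⟨μp, hμp0, hμp1, hμpocc⟩ := ih np hsubp hbdp hsump
    obtain ⟨μm, hμm0, hμm1, hμmocc⟩ := ih nm hsubm hbdm hsumm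
    refine ⟨fun s => lam * μp s + (1 - lam) * μm s, ?_, ?_, ?_⟩
    · intro s
      exact add_nonneg (mul_nonneg hlam0 (hμp0 s)) (mul_nonneg (by linarith) (hμm0 s))
    · rw [Finset.sum_add_distrib, ← Finset.mul_sum, ← Finset.mul_sum, hμp1, hμm1]
      ring
    · intro x
      rw [hconv x, hμpocc x, hμmocc x, Finset.mul_sum, Finset.mul_sum,
        ← Finset.sum_add_distrib]
      refine Finset.sum_congr rfl fun s _ => ?_
      ring

end ColemanAux

open ColemanAux in
/-- (Coleman, fermionic case) Every Hermitian `N_b × N_b` matrix `γ` with `0 ≤ γ ≤ 1` and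
`Tr γ = N` is the 1RDM of some `N`-fermion density matrix. Moreover, the underlying combinatorial
fact holds: every occupation-number vector `n ∈ [0,1]^{N_b}` with `∑ nᵢ = N` is a convex
combination of 0/1 vectors with exactly `N` ones (the extreme points of the polytope). -/
theorem coleman_fermionic {Nb N : ℕ} (hN : N ≤ Nb) :
    (∀ γ : Matrix (Fin Nb) (Fin Nb) ℂ, γ.PosSemidef → (1 - γ).PosSemidef →
      γ.trace = (N : ℂ) →
      ∃ ρ : Matrix (FConfig Nb N) (FConfig Nb N) ℂ,
        ρ.PosSemidef ∧ ρ.trace = 1 ∧ gammaF ρ = γ) ∧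
    (∀ n : Fin Nb → ℝ, (∀ i, 0 ≤ n i ∧ n i ≤ 1) → ∑ i, n i = N →
      ∃ μ : FConfig Nb N → ℝ, (∀ s, 0 ≤ μ s) ∧ ∑ s, μ s = 1 ∧
        ∀ i, n i = ∑ s, μ s * (if i ∈ s.1 then 1 else 0)) := by
  have part2 : ∀ n : Fin Nb → ℝ, (∀ i, 0 ≤ n i ∧ n i ≤ 1) → (∑ i, n i) = N →
      ∃ μ : FConfig Nb N → ℝ, (∀ s, 0 ≤ μ s) ∧ (∑ s, μ s) = 1 ∧
        ∀ i, n i = ∑ s, μ s * (if i ∈ s.1 then 1 else 0) := by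
    intro n hbd hsum
    refine occupation N Nb n ?_ hbd hsum
    calc (Finset.univ.filter (fun i => n i ≠ 0 ∧ n i ≠ 1)).card
        ≤ (Finset.univ : Finset (Fin Nb)).card := Finset.card_filter_le _ _
      _ = Nb := by simp
  refine ⟨?_, part2⟩
  intro γ hpsd h1γ htr
  have hH : γ.IsHermitian := hpsd.1
  set U : Matrix (Fin Nb) (Fin Nb) ℂ :=
    (Matrix.IsHermitian.eigenvectorUnitary hH : Matrix (Fin Nb) (Fin Nb) ℂ) with hUdef
  have hUs : star U * U = 1 :=
    Matrix.mem_unitaryGroup_iff'.mp (Matrix.IsHermitian.eigenvectorUnitary hH).2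
  have hU : Uᴴ * U = 1 := by rw [← Matrix.star_eq_conjTranspose]; exact hUs
  set n : Fin Nb → ℝ := hH.eigenvalues with hndef
  have hspec : γ = U * Matrix.diagonal (RCLike.ofReal ∘ n) * star U := hH.spectral_theorem
  -- eigenvalues are nonnegative
  have h0 : ∀ k, 0 ≤ n k := fun k => hpsd.eigenvalues_nonneg k
  -- eigenvalues are at most 1
  have h1 : ∀ k, n k ≤ 1 := by
    intro k
    have hc : (Uᴴ * (1 - γ) * U).PosSemidef := h1γ.conjTranspose_mul_mul_same U
    have hM : Uᴴ * (1 - γ) * U = 1 - Matrix.diagonal (RCLike.ofReal ∘ n) := by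
      rw [Matrix.mul_sub, Matrix.sub_mul, Matrix.mul_one, hU]
      congr 1
      rw [hspec]
      rw [← Matrix.star_eq_conjTranspose]
      calc star U * (U * Matrix.diagonal (RCLike.ofReal ∘ n) * star U) * U
          = (star U * U) * Matrix.diagonal (RCLike.ofReal ∘ n) * (star U * U) := by
            simp only [Matrix.mul_assoc]
        _ = Matrix.diagonal (RCLike.ofReal ∘ n) := by rw [hUs, Matrix.one_mul, Matrix.mul_one]
    have hq := hc.dotProduct_mulVec_nonneg (Pi.single k 1)
    rw [hM] at hq
    have hent : dotProduct (star (Pi.single k 1))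
        ((1 - Matrix.diagonal (RCLike.ofReal ∘ n)) *ᵥ Pi.single k 1) =
        1 - (n k : ℂ) := by
      rw [Matrix.mulVec_single]
      simp [dotProduct, Pi.single_apply, Matrix.one_apply, Matrix.diagonal,
        Finset.sum_ite_eq, apply_ite (starRingEnd ℂ)]
    rw [hent] at hq
    have : (0 : ℂ) ≤ ((1 - n k : ℝ) : ℂ) := by push_cast; convert hq using 1
    have := Complex.zero_le_real.1 this
    linarith
  -- the eigenvalues sum to N
  have hsumn : (∑ k, n k) = (N : ℝ) := by
    have htrD : γ.trace = ∑ k, (n k : ℂ) := by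
      conv_lhs => rw [hspec]
      rw [Matrix.trace_mul_comm, ← Matrix.mul_assoc, hUs, Matrix.one_mul,
        Matrix.trace_diagonal]
      rfl
    have : (∑ k, (n k : ℂ)) = (N : ℂ) := htrD ▸ htr
    exact_mod_cast this
  obtain ⟨μ, hμ0, hμ1, hμocc⟩ := part2 n (fun k => ⟨h0 k, h1 k⟩) hsumn
  -- occupation numbers in ℂ
  have hoccC : ∀ k, (n k : ℂ) = ∑ p : FConfig Nb N, (μ p : ℂ) *
      (if k ∈ p.1 then 1 else 0) := by
    intro k
    rw [hμocc k]
    push_cast [apply_ite (Complex.ofReal)]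
    rfl
  set ρ : Matrix (FConfig Nb N) (FConfig Nb N) ℂ := fun x y =>
    ∑ p : FConfig Nb N, (μ p : ℂ) * (sd U N p.1 x.1 * (starRingEnd ℂ) (sd U N p.1 y.1))
    with hρ
  refine ⟨ρ, Matrix.PosSemidef.of_dotProduct_mulVec_nonneg ?_ ?_, ?_, ?_⟩
  · -- Hermitian
    ext x y
    rw [Matrix.conjTranspose_apply]
    simp only [Matrix.conjTranspose_apply, hρ, RCLike.star_def]
    rw [map_sum]
    refine Finset.sum_congr rfl fun p _ => ?_
    simp only [_root_.map_mul, Complex.conj_ofReal, Complex.conj_conj]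
    ring
  · -- positive semidefinite
    intro v
    have hexp : dotProduct (star v) (ρ *ᵥ v) = ∑ p : FConfig Nb N, (μ p : ℂ) *
        ((∑ t : FConfig Nb N, (starRingEnd ℂ) (v t) * sd U N p.1 t.1) *
          (starRingEnd ℂ) (∑ t : FConfig Nb N, (starRingEnd ℂ) (v t) * sd U N p.1 t.1)) := by
      calc dotProduct (star v) (ρ *ᵥ v)
          = ∑ t : FConfig Nb N, (starRingEnd ℂ) (v t) * ∑ u : FConfig Nb N, ρ t u * v u := by
            simp only [dotProduct, Matrix.mulVec, Pi.star_apply, starRingEnd_apply]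
        _ = ∑ t : FConfig Nb N, ∑ u : FConfig Nb N, ∑ p : FConfig Nb N,
            (starRingEnd ℂ) (v t) *
              ((μ p : ℂ) * (sd U N p.1 t.1 * (starRingEnd ℂ) (sd U N p.1 u.1))) * v u := by
            refine Finset.sum_congr rfl fun t _ => ?_
            conv_lhs => rw [Finset.mul_sum]
            refine Finset.sum_congr rfl fun u _ => ?_
            have e1 : ρ t u = ∑ p : FConfig Nb N,
                (μ p : ℂ) * (sd U N p.1 t.1 * (starRingEnd ℂ) (sd U N p.1 u.1)) := rfl
            conv_lhs => rw [e1, Finset.sum_mul, Finset.mul_sum]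
            refine Finset.sum_congr rfl fun p _ => ?_
            ring
        _ = ∑ p : FConfig Nb N, ∑ t : FConfig Nb N, ∑ u : FConfig Nb N,
            (starRingEnd ℂ) (v t) *
              ((μ p : ℂ) * (sd U N p.1 t.1 * (starRingEnd ℂ) (sd U N p.1 u.1))) * v u := by
            rw [show (∑ t : FConfig Nb N, ∑ u : FConfig Nb N, ∑ p : FConfig Nb N,
              (starRingEnd ℂ) (v t) *
                ((μ p : ℂ) * (sd U N p.1 t.1 * (starRingEnd ℂ) (sd U N p.1 u.1))) * v u) =
              ∑ t : FConfig Nb N, ∑ p : FConfig Nb N, ∑ u : FConfig Nb N, _ from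
              Finset.sum_congr rfl fun t _ => Finset.sum_comm, Finset.sum_comm]
        _ = ∑ p : FConfig Nb N, (μ p : ℂ) *
            ((∑ t : FConfig Nb N, (starRingEnd ℂ) (v t) * sd U N p.1 t.1) *
              (∑ u : FConfig Nb N, (starRingEnd ℂ) (sd U N p.1 u.1) * v u)) := by
            refine Finset.sum_congr rfl fun p _ => ?_
            rw [Finset.sum_mul_sum, Finset.mul_sum]
            refine Finset.sum_congr rfl fun t _ => ?_
            rw [Finset.mul_sum]
            refine Finset.sum_congr rfl fun u _ => ?_
            ring
        _ = _ := by
            refine Finset.sum_congr rfl fun p _ => ?_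
            congr 1
            congr 1
            rw [map_sum]
            refine Finset.sum_congr rfl fun u _ => ?_
            rw [_root_.map_mul, Complex.conj_conj]
            ring
    rw [hexp]
    refine Finset.sum_nonneg fun p _ => ?_
    rw [Complex.mul_conj]
    rw [show ((μ p : ℂ) * ((Complex.normSq (∑ t : FConfig Nb N,
      (starRingEnd ℂ) (v t) * sd U N p.1 t.1) : ℝ) : ℂ)) =
      (((μ p * Complex.normSq (∑ t : FConfig Nb N,
        (starRingEnd ℂ) (v t) * sd U N p.1 t.1)) : ℝ) : ℂ) by push_cast; ring]
    exact Complex.zero_le_real.2 (mul_nonneg (hμ0 p) (Complex.normSq_nonneg _))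
  · -- trace one
    have : ρ.trace = ∑ x : FConfig Nb N, ∑ p : FConfig Nb N,
        (μ p : ℂ) * (sd U N p.1 x.1 * (starRingEnd ℂ) (sd U N p.1 x.1)) := rfl
    rw [this, Finset.sum_comm]
    have hone : ∀ p : FConfig Nb N, (∑ x : FConfig Nb N,
        (μ p : ℂ) * (sd U N p.1 x.1 * (starRingEnd ℂ) (sd U N p.1 x.1))) = (μ p : ℂ) := by
      intro p
      rw [← Finset.mul_sum]
      rw [sum_config (fun x => sd U N p.1 x * (starRingEnd ℂ) (sd U N p.1 x))]
      rw [show (∑ x ∈ Finset.powersetCard N (Finset.univ : Finset (Fin Nb)),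
        sd U N p.1 x * (starRingEnd ℂ) (sd U N p.1 x)) =
        ∑ x ∈ Finset.powersetCard N (Finset.univ : Finset (Fin Nb)),
        (starRingEnd ℂ) (sd U N p.1 x) * sd U N p.1 x from
        Finset.sum_congr rfl fun x _ => mul_comm _ _]
      rw [gram U hU N p.1 p.1 p.2 p.2, if_pos rfl, mul_one]
    rw [Finset.sum_congr rfl fun p _ => hone p]
    rw [show (∑ p : FConfig Nb N, (μ p : ℂ)) = ((∑ p : FConfig Nb N, μ p : ℝ) : ℂ) by
      push_cast; rfl]
    rw [hμ1, Complex.ofReal_one]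
  · -- the 1RDM is γ
    funext i j
    show (ρ * fOp j i).trace = γ i j
    calc (ρ * fOp j i).trace
        = ∑ x : FConfig Nb N, ∑ y : FConfig Nb N, ρ x y * fOp j i y x := by
          simp only [Matrix.trace, Matrix.diag, Matrix.mul_apply]
      _ = ∑ y : FConfig Nb N, ∑ x : FConfig Nb N, ρ x y * fOp j i y x := Finset.sum_comm
      _ = ∑ y : FConfig Nb N, ∑ x : FConfig Nb N, ∑ p : FConfig Nb N,
          (μ p : ℂ) * (sd U N p.1 x.1 * (starRingEnd ℂ) (sd U N p.1 y.1) * fOp j i y x) := by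
          refine Finset.sum_congr rfl fun y _ => Finset.sum_congr rfl fun x _ => ?_
          simp only [hρ]
          rw [Finset.sum_mul]
          refine Finset.sum_congr rfl fun p _ => ?_
          ring
      _ = ∑ p : FConfig Nb N, ∑ y : FConfig Nb N, ∑ x : FConfig Nb N,
          (μ p : ℂ) * (sd U N p.1 x.1 * (starRingEnd ℂ) (sd U N p.1 y.1) * fOp j i y x) := by
          rw [show (∑ y : FConfig Nb N, ∑ x : FConfig Nb N, ∑ p : FConfig Nb N,
            (μ p : ℂ) * (sd U N p.1 x.1 * (starRingEnd ℂ) (sd U N p.1 y.1) * fOp j i y x)) =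
            ∑ y : FConfig Nb N, ∑ p : FConfig Nb N, ∑ x : FConfig Nb N, _ from
            Finset.sum_congr rfl fun y _ => Finset.sum_comm, Finset.sum_comm]
      _ = ∑ p : FConfig Nb N, (μ p : ℂ) * ∑ k ∈ p.1, U i k * (starRingEnd ℂ) (U j k) := by
          refine Finset.sum_congr rfl fun p _ => ?_
          rw [← slater_gamma U hU p.1 p.2 i j, Finset.mul_sum]
          refine Finset.sum_congr rfl fun y _ => ?_
          rw [Finset.mul_sum]
      _ = ∑ k : Fin Nb, (n k : ℂ) * (U i k * (starRingEnd ℂ) (U j k)) := by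
          have hreindex : ∀ p : FConfig Nb N, ((μ p : ℂ) *
              ∑ k ∈ p.1, U i k * (starRingEnd ℂ) (U j k)) =
              ∑ k : Fin Nb, ((μ p : ℂ) * (if k ∈ p.1 then 1 else 0)) *
                (U i k * (starRingEnd ℂ) (U j k)) := by
            intro p
            rw [Finset.mul_sum]
            rw [show (∑ k ∈ p.1, (μ p : ℂ) * (U i k * (starRingEnd ℂ) (U j k))) =
              ∑ k ∈ Finset.univ.filter (· ∈ p.1),
                (μ p : ℂ) * (U i k * (starRingEnd ℂ) (U j k)) by
              rw [Finset.filter_univ_mem]]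
            rw [Finset.sum_filter]
            refine Finset.sum_congr rfl fun k _ => ?_
            by_cases hk : k ∈ p.1
            · rw [if_pos hk, if_pos hk, mul_one]
            · rw [if_neg hk, if_neg hk, mul_zero, zero_mul]
          rw [Finset.sum_congr rfl fun p _ => hreindex p, Finset.sum_comm]
          refine Finset.sum_congr rfl fun k _ => ?_
          rw [← Finset.sum_mul, ← hoccC k]
      _ = γ i j := by
          conv_rhs => rw [hspec]
          rw [Matrix.mul_assoc, Matrix.mul_apply]
          refine Finset.sum_congr rfl fun k _ => ?_
          rw [Matrix.diagonal_mul]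
          simp only [Function.comp_apply, Matrix.star_apply, RCLike.star_def]
          rw [show (RCLike.ofReal (n k) : ℂ) = ((n k : ℝ) : ℂ) from rfl]
          ring
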